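/- In a finite undirected graph G with disjoint vertex sets X, Y, if K₁ and K₂ are X–Y separators with K₁ ≺* K₂ (i.e., NR(G,Y,K₁) ⊊ NR(G,Y,K₂)), then K₁ \ K₂ ⊆ NR(G,Y,K₂). -/

import Mathlib

/-- The graph obtained from `G` by deleting the vertex set `B`
(edges incident to `B` are removed). -/
def SimpleGraph.deleteSet {V : Type*} (G : SimpleGraph V) (B : Set V) : SimpleGraph V where
  Adj u v := G.Adj u v ∧ u ∉ B ∧ v ∉ B
  symm := ⟨fun u v ⟨h, hu, hv⟩ => ⟨h.symm, hv, hu⟩⟩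
  loopless := ⟨fun u h => G.loopless.irrefl u h.1⟩

/-- `NR G A B` : the set of vertices not reachable from `A` in `G − B`. -/
def NR {V : Type*} (G : SimpleGraph V) (A B : Set V) : Set V :=
  {v | ∀ a ∈ A, ¬ (G.deleteSet B).Reachable a v}

/-- `K` is an `X–Y` separator: it is disjoint from `X ∪ Y` and its removal
leaves no path from `X` to `Y`. -/
def IsSeparator {V : Type*} (G : SimpleGraph V) (X Y K : Set V) : Prop :=
  Disjoint K (X ∪ Y) ∧ ∀ x ∈ X, ∀ y ∈ Y, ¬ (G.deleteSet K).Reachable x y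

/-- The order `≺*` on `X–Y` separators: `K₁ ≺* K₂` iff `NR(G,Y,K₁) ⊊ NR(G,Y,K₂)`. -/
def precStar {V : Type*} (G : SimpleGraph V) (Y K₁ K₂ : Set V) : Prop :=
  NR G Y K₁ ⊂ NR G Y K₂

/-- An important `X–Y` separator: a minimal separator `K` such that no separator
`K'` satisfies `K ≺* K'` and `|K'| ≤ |K|`. -/
def IsImportant {V : Type*} (G : SimpleGraph V) (X Y K : Set V) : Prop :=
  IsSeparator G X Y K ∧ (∀ K' ⊂ K, ¬ IsSeparator G X Y K') ∧
    ¬ ∃ K', IsSeparator G X Y K' ∧ precStar G Y K K' ∧ K'.ncard ≤ K.ncard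

/-- if `K₁ ≺* K₂` then `K₁ \ K₂ ⊆ NR(G,Y,K₂)`. -/
theorem sdiff_subset_NR {V : Type*} (G : SimpleGraph V) (X Y : Set V)
    (hXY : Disjoint X Y) (K₁ K₂ : Set V)
    (h₁ : IsSeparator G X Y K₁) (h₂ : IsSeparator G X Y K₂)
    (h₁₂ : precStar G Y K₁ K₂) : K₁ \ K₂ ⊆ NR G Y K₂ := by
  intro v hv
  intro y hy hr
  -- v ∉ NR G Y K₂, so v ∉ NR G Y K₁ by the strict subset
  have hvK₁ : v ∈ K₁ := hv.1
  have hvn₂ : v ∉ NR G Y K₂ := fun h => h y hy hr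
  have hvn₁ : v ∉ NR G Y K₁ := fun h => hvn₂ (h₁₂.1 h)
  simp only [NR, Set.mem_setOf_eq, not_forall] at hvn₁
  obtain ⟨y', hy', hr'⟩ := hvn₁
  rw [not_not] at hr'
  obtain ⟨p⟩ := hr'.symm
  cases p with
  | nil =>
    exact Set.disjoint_left.mp h₁.1 hvK₁ (Set.mem_union_right _ hy')
  | cons h _ => exact h.2.1 hvK₁
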